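/- Let A and B be finite Abelian groups with |B| = r, and let G be an r-regular graph admitting an A-distance magic labeling. Then the disjoint union rG of r copies of G admits an (A ⊕ B)-distance magic labeling, with magic constant (μ', 0) where μ' is the magic constant for G. -/

import Mathlib

open Finset

noncomputable def vertexWeight {V Γ : Type*} [Fintype V] [AddCommMonoid Γ]
    (G : SimpleGraph V) (ℓ : V → Γ) (x : V) : Γ := by
  classical exact ∑ y ∈ Finset.univ.filter (fun v => G.Adj x v), ℓ y

/-- `ℓ` is a distance magic labeling of `G` with magic constant `μ`. -/
def IsDistMagic {V Γ : Type*} [Fintype V] [AddCommMonoid Γ]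
    (G : SimpleGraph V) (ℓ : V → Γ) (μ : Γ) : Prop :=
  Function.Bijective ℓ ∧ ∀ x, vertexWeight G ℓ x = μ

noncomputable def degOf {V : Type*} [Fintype V] (G : SimpleGraph V) (v : V) : ℕ := by
  classical exact (Finset.univ.filter (fun u => G.Adj v u)).card

/-- The generalized Petersen graph `GP(n,k)` on vertex set `ZMod n ⊕ ZMod n`:
`Sum.inl i` is the outer vertex `x_i`, `Sum.inr i` the inner vertex `y_i`. -/
def GP (n k : ℕ) : SimpleGraph (ZMod n ⊕ ZMod n) :=
  SimpleGraph.fromRel (fun a b =>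
    match a, b with
    | Sum.inl i, Sum.inl j => j = i + 1
    | Sum.inr i, Sum.inr j => j = i + (k : ZMod n)
    | Sum.inl i, Sum.inr j => i = j
    | _, _ => False)

/-- A balanced zero-neighborhood labeling of a graph `G` on `2n` vertices. -/
noncomputable def IsBZN {V : Type*} [Fintype V] (G : SimpleGraph V) (n : ℕ)
    (ℓ : V → ZMod 2) : Prop := by
  classical exact
    (Finset.univ.filter (fun v => ℓ v = 0)).card = n ∧
    (Finset.univ.filter (fun v => ℓ v = 1)).card = n ∧
    ∀ v, vertexWeight G ℓ v = 0

/-- `copies t G` : the disjoint union of `t` copies of `G`. -/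
def copies {V : Type*} (t : ℕ) (G : SimpleGraph V) : SimpleGraph (Fin t × V) where
  Adj a b := a.1 = b.1 ∧ G.Adj a.2 b.2
  symm := ⟨fun a b h => ⟨h.1.symm, h.2.symm⟩⟩
  loopless := ⟨fun a h => G.loopless.irrefl a.2 h.2⟩

theorem stmt19 {V A B : Type*} [Fintype V] [AddCommGroup A] [Fintype A]
    [AddCommGroup B] [Fintype B]
    (G : SimpleGraph V) (r : ℕ) (hB : Fintype.card B = r)
    (hreg : ∀ v, degOf G v = r)
    (hA : Fintype.card A = Fintype.card V)
    (ℓ' : V → A) (μ' : A) (hmagic : IsDistMagic G ℓ' μ') :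
    ∃ ℓ : Fin r × V → A × B, IsDistMagic (copies r G) ℓ (μ', (0 : B)) := by
  classical
  obtain ⟨hbij, hw⟩ := hmagic
  have e : B ≃ Fin r := Fintype.equivFinOfCardEq hB
  refine ⟨fun p => (ℓ' p.2, e.symm p.1), ?_, ?_⟩
  · constructor
    · rintro ⟨i, v⟩ ⟨j, u⟩ h
      simp only [Prod.mk.injEq] at h
      exact Prod.ext (e.symm.injective h.2) (hbij.1 h.1)
    · rintro ⟨a, b⟩
      obtain ⟨v, hv⟩ := hbij.2 a
      exact ⟨(e b, v), by simp [hv]⟩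
  · rintro ⟨i, v⟩
    have hset : (Finset.univ.filter (fun p => (copies r G).Adj (i, v) p))
        = {i} ×ˢ (Finset.univ.filter (fun u => G.Adj v u)) := by
      ext ⟨j, u⟩
      simp only [Finset.mem_filter, Finset.mem_univ, true_and, Finset.mem_product,
        Finset.mem_singleton]
      change (i = j ∧ G.Adj v u) ↔ _
      constructor
      · rintro ⟨rfl, h⟩; exact ⟨rfl, h⟩
      · rintro ⟨rfl, h⟩; exact ⟨rfl, h⟩
    rw [vertexWeight, hset, Finset.sum_product, Finset.sum_singleton]
    rw [Prod.ext_iff]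
    constructor
    · simpa [vertexWeight, Prod.fst_sum] using hw v
    · have hcard : (Finset.univ.filter (fun u => G.Adj v u)).card = r := hreg v
      simp only [Prod.snd_sum, Finset.sum_const, hcard]
      subst hB
      exact card_nsmul_eq_zero
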